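/- arXiv:2101.03402 — 16 statements merged into one kernel-verified Lean document; each statement's English description precedes it below -/
import Mathlib

section
/- Let (a_n)_{n≥1} be a sequence of positive real numbers. The series ∑ a_n diverges if and only if there exist a sequence (q_n)_{n≥1} of positive real numbers and an integer N ≥ 1 such that the series ∑ 1/q_n diverges and q_n · (a_n / a_{n+1}) − q_{n+1} ≤ 0 for all n ≥ N. -/
/-- Kummer's test, divergence part. -/
theorem kummer_divergence (a : ℕ → ℝ) (ha : ∀ n, 1 ≤ n → 0 < a n) :
    ¬ Summable (fun n : ℕ => a (n + 1)) ↔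
      ∃ (q : ℕ → ℝ) (N : ℕ), (∀ n, 1 ≤ n → 0 < q n) ∧ 1 ≤ N ∧
        ¬ Summable (fun n : ℕ => 1 / q (n + 1)) ∧
        ∀ n, N ≤ n → q n * (a n / a (n + 1)) - q (n + 1) ≤ 0 := by
  constructor
  · intro h
    refine ⟨fun n => 1 / a n, 1, fun n hn => one_div_pos.mpr (ha n hn), le_refl 1, ?_, ?_⟩
    · simpa only [one_div_one_div] using h
    · intro n hn
      have h1 := (ha n hn).ne'
      have h2 := (ha (n + 1) (by omega)).ne'
      have : (1 / a n) * (a n / a (n + 1)) = 1 / a (n + 1) := by field_simp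
      rw [this]
      simp
  · rintro ⟨q, N, hq, hN, hdiv, hle⟩
    intro hsum
    apply hdiv
    have key : ∀ n, N ≤ n → q N * a N ≤ q n * a n := by
      intro n hn
      induction n with
      | zero => omega
      | succ m ih =>
        rcases Nat.lt_or_ge m N with h | h
        · have : N = m + 1 := by omega
          rw [this]
        · have hlem := hle m h
          have ham := ha m (by omega)
          have ham1 := ha (m + 1) (by omega)
          have hstep : q m * a m ≤ q (m + 1) * a (m + 1) := by
            have h' : q m * (a m / a (m + 1)) ≤ q (m + 1) := by linarith
            calc q m * a m = q m * (a m / a (m + 1)) * a (m + 1) := by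
                  field_simp
              _ ≤ q (m + 1) * a (m + 1) := by nlinarith
          exact le_trans (ih h) hstep
    set c := q N * a N with hc_def
    have hc : 0 < c := mul_pos (hq N hN) (ha N hN)
    have hmaj : ∀ n, N ≤ n + 1 → 1 / q (n + 1) ≤ a (n + 1) / c := by
      intro n hn
      have hk := key (n + 1) hn
      have hq1 := hq (n + 1) (by omega)
      have ha1 := ha (n + 1) (by omega)
      rw [div_le_div_iff₀ hq1 hc]
      nlinarith
    have hsum' : Summable (fun n => a (n + 1) / c) := hsum.div_const c
    have hshift : Summable (fun n : ℕ => a (n + N + 1) / c) :=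
      (summable_nat_add_iff N).mpr hsum'
    have h2 : Summable (fun n : ℕ => 1 / q (n + N + 1)) := by
      refine Summable.of_nonneg_of_le (fun n => ?_) (fun n => ?_) hshift
      · exact le_of_lt (one_div_pos.mpr (hq (n + N + 1) (by omega)))
      · exact hmaj (n + N) (by omega)
    exact (summable_nat_add_iff N).mp h2
end

section
/- Let (a_n)_{n≥1} be a sequence of positive real numbers and let m ≥ 1 be a fixed positive integer. If there exist a sequence (q_n)_{n≥1} of positive real numbers, a real number c > 0, and an integer N such that q_n · (a_n / a_{n+m}) − q_{n+m} ≥ c for all n ≥ N, then the series ∑ a_n converges. -/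
/-- Extended Kummer convergence test with step `m`. -/
theorem kummer_step_convergence (a : ℕ → ℝ) (ha : ∀ n, 1 ≤ n → 0 < a n)
    (m : ℕ) (hm : 1 ≤ m) (q : ℕ → ℝ) (hq : ∀ n, 1 ≤ n → 0 < q n)
    (c : ℝ) (hc : 0 < c) (N : ℕ)
    (h : ∀ n, N ≤ n → q n * (a n / a (n + m)) - q (n + m) ≥ c) :
    Summable (fun n : ℕ => a (n + 1)) := by
  set M := max N 1 with hM
  set b : ℕ → ℝ := fun k => q k * a k with hb
  have hbpos : ∀ k, 1 ≤ k → 0 < b k := fun k hk => mul_pos (hq k hk) (ha k hk)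
  -- key inequality
  have key : ∀ i : ℕ, c * a (i + M + m) ≤ b (i + M) - b (i + M + m) := by
    intro i
    have hn : N ≤ i + M := le_trans (le_max_left N 1) (Nat.le_add_left M i)
    have hp := h (i + M) hn
    have hap : 0 < a (i + M + m) := ha _ (by omega)
    have h1 : q (i + M) * (a (i + M) / a (i + M + m)) * a (i + M + m)
        = q (i + M) * a (i + M) := by
      field_simp
    have h2 : (q (i + M) * (a (i + M) / a (i + M + m)) - q (i + M + m)) * a (i + M + m)
        ≥ c * a (i + M + m) := by
      apply mul_le_mul_of_nonneg_right hp hap.le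
    simp only [hb]
    nlinarith [h2, h1]
  -- bounded partial sums
  have bound : ∀ n : ℕ, ∑ i ∈ Finset.range n, a (i + M + m) ≤
      (∑ j ∈ Finset.range m, b (j + M)) / c := by
    intro n
    rw [le_div_iff₀ hc, Finset.sum_mul]
    have step1 : ∑ i ∈ Finset.range n, a (i + M + m) * c ≤
        ∑ i ∈ Finset.range n, (b (i + M) - b (i + M + m)) := by
      apply Finset.sum_le_sum
      intro i _
      calc a (i + M + m) * c = c * a (i + M + m) := mul_comm _ _
        _ ≤ _ := key i
    refine step1.trans ?_
    set B : ℕ → ℝ := fun i => ∑ j ∈ Finset.range m, b (i + j + M) with hB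
    have hBtel : ∀ i : ℕ, b (i + M) - b (i + M + m) = B i - B (i + 1) := by
      intro i
      have := Finset.sum_range_sub' (f := fun j => b (i + j + M)) m
      have e1 : i + 0 + M = i + M := by ring
      have e2 : i + m + M = i + M + m := by ring
      rw [e1, e2] at this
      rw [← this, hB]
      rw [← Finset.sum_sub_distrib]
      apply Finset.sum_congr rfl
      intro j _
      have : i + 1 + j + M = i + (j + 1) + M := by ring
      rw [this]
    have : ∑ i ∈ Finset.range n, (b (i + M) - b (i + M + m)) = B 0 - B n := by
      calc ∑ i ∈ Finset.range n, (b (i + M) - b (i + M + m))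
          = ∑ i ∈ Finset.range n, (B i - B (i + 1)) :=
            Finset.sum_congr rfl fun i _ => hBtel i
        _ = B 0 - B n := Finset.sum_range_sub' B n
    rw [this]
    have hB0 : B 0 = ∑ j ∈ Finset.range m, b (j + M) := by
      simp [hB]
    have hBn : 0 ≤ B n := Finset.sum_nonneg fun j _ => (hbpos _ (by omega)).le
    linarith [hB0 ▸ (sub_le_self (B 0) hBn)]
  have hs : Summable (fun i : ℕ => a (i + M + m)) := by
    apply summable_of_sum_range_le (c := (∑ j ∈ Finset.range m, b (j + M)) / c)
    · intro i; exact (ha _ (by omega)).le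
    · exact bound
  rw [← summable_nat_add_iff (M + m - 1)]
  have hk : ∀ n : ℕ, n + (M + m - 1) + 1 = n + M + m := by
    intro n; omega
  simpa only [hk] using hs
end

section
/- Let (a_n)_{n≥1} be a sequence of positive real numbers whose series ∑ a_n diverges, and let m ≥ 1 be a fixed positive integer. Then there exists a sequence (q_n)_{n≥1} of positive real numbers, namely q_n = (a_1 + ⋯ + a_n)/a_n, such that the series ∑ 1/q_n diverges, q_n · a_n ≥ a_1 > 0 for all n ≥ 1, and q_n · (a_n / a_{n+m}) − q_{n+m} ≤ 0 for all n ≥ 1. -/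
/-- Converse of the extended Kummer divergence test with step `m`:
one may take `q n = (a 1 + ⋯ + a n) / a n`. -/
theorem kummer_step_divergence_converse (a : ℕ → ℝ) (ha : ∀ n, 1 ≤ n → 0 < a n)
    (m : ℕ) (hm : 1 ≤ m) (hdiv : ¬ Summable (fun n : ℕ => a (n + 1))) :
    ∃ q : ℕ → ℝ, q = (fun n : ℕ => (∑ i ∈ Finset.Icc 1 n, a i) / a n) ∧
      (∀ n, 1 ≤ n → 0 < q n) ∧
      ¬ Summable (fun n : ℕ => 1 / q (n + 1)) ∧
      (∀ n, 1 ≤ n → q n * a n ≥ a 1) ∧ 0 < a 1 ∧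
      (∀ n, 1 ≤ n → q n * (a n / a (n + m)) - q (n + m) ≤ 0) := by
  set S : ℕ → ℝ := fun n => ∑ i ∈ Finset.Icc 1 n, a i with hS
  have hSrange : ∀ n, S n = ∑ i ∈ Finset.range n, a (i + 1) := by
    intro n
    rw [hS]
    simp only
    rw [show Finset.Icc 1 n = Finset.Ico 1 (n + 1) by rfl, Finset.sum_Ico_eq_sum_range]
    simp [add_comm]
  have hSpos : ∀ n, 1 ≤ n → 0 < S n := by
    intro n hn
    apply Finset.sum_pos
    · intro i hi
      exact ha i (Finset.mem_Icc.mp hi).1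
    · exact ⟨1, Finset.mem_Icc.mpr ⟨le_refl 1, hn⟩⟩
  have hSmono : Monotone S := by
    intro i j hij
    apply Finset.sum_le_sum_of_subset_of_nonneg
    · exact Finset.Icc_subset_Icc_right hij
    · intro k hk _
      exact (ha k (Finset.mem_Icc.mp hk).1).le
  have hle : ∀ n, 1 ≤ n → a 1 ≤ S n := by
    intro n hn
    apply Finset.single_le_sum (f := a) (fun i hi => (ha i (Finset.mem_Icc.mp hi).1).le)
    exact Finset.mem_Icc.mpr ⟨le_refl 1, hn⟩
  refine ⟨fun n => S n / a n, rfl, ?_, ?_, ?_, ha 1 le_rfl, ?_⟩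
  · intro n hn
    exact div_pos (hSpos n hn) (ha n hn)
  · -- divergence of ∑ a(n+1)/S(n+1)
    intro hb
    have hb' : ∀ n : ℕ, (1:ℝ) / (S (n+1) / a (n+1)) = a (n+1) / S (n+1) := by
      intro n; rw [one_div_div]
    -- S tends to atTop
    have hST : Filter.Tendsto (fun n => ∑ i ∈ Finset.range n, a (i + 1))
        Filter.atTop Filter.atTop := by
      refine (not_summable_iff_tendsto_nat_atTop_of_nonneg ?_).mp hdiv
      intro i; exact (ha (i+1) (Nat.le_add_left 1 i)).le
    have hST' : Filter.Tendsto S Filter.atTop Filter.atTop := by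
      refine hST.congr fun n => (hSrange n).symm
    obtain ⟨s, hs⟩ := hb.vanishing (e := Set.Iio (1/2 : ℝ))
      (Iio_mem_nhds (by norm_num))
    set N : ℕ := s.sup id + 1 with hN
    obtain ⟨N', hN'1, hN'2⟩ :=
      ((hST'.eventually_ge_atTop (2 * S N + 1)).and
        (Filter.eventually_ge_atTop (N + 1))).exists
    have hdisj : Disjoint (Finset.Ico N N') s := by
      rw [Finset.disjoint_left]
      intro k hk hks
      have h1 : k ≥ N := (Finset.mem_Ico.mp hk).1
      have h2 : k ≤ s.sup id := Finset.le_sup (f := id) hks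
      omega
    have hmem := hs (Finset.Ico N N') hdisj
    simp only [hb', Set.mem_Iio] at hmem
    -- lower bound the sum
    have hSN' : 0 < S N' := hSpos N' (by omega)
    have hlow : (S N' - S N) / S N' ≤ ∑ k ∈ Finset.Ico N N', a (k+1) / S (k+1) := by
      have hsum : ∑ k ∈ Finset.Ico N N', a (k+1) = S N' - S N := by
        rw [hSrange N', hSrange N, eq_sub_iff_add_eq, ← Finset.sum_range_add_sum_Ico _ (by omega : N ≤ N'), add_comm]
      rw [← hsum, Finset.sum_div]
      apply Finset.sum_le_sum
      intro k hk
      have hk2 : k + 1 ≤ N' := (Finset.mem_Ico.mp hk).2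
      exact div_le_div_of_nonneg_left (ha (k+1) (Nat.le_add_left 1 k)).le
        (hSpos (k+1) (Nat.le_add_left 1 k)) (hSmono hk2)
    have hhalf : (1:ℝ)/2 ≤ (S N' - S N) / S N' := by
      rw [le_div_iff₀ hSN']
      nlinarith
    linarith
  · intro n hn
    have : S n / a n * a n = S n := div_mul_cancel₀ _ (ha n hn).ne'
    rw [this]
    exact hle n hn
  · intro n hn
    have hnm : 1 ≤ n + m := by omega
    have h1 : S n / a n * (a n / a (n + m)) = S n / a (n + m) := by
      field_simp
      rw [mul_comm (a n) (a (n+m)), mul_div_mul_right _ _ (ha n hn).ne']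
    rw [h1, sub_nonpos]
    exact (div_le_div_iff_of_pos_right (ha _ hnm)).mpr (hSmono (Nat.le_add_right n m))
end

section
/- Let (a_n)_{n≥1} and (c_n)_{n≥1} be sequences of positive real numbers. The series ∑ c_n a_n converges if and only if there exist a sequence (q_n)_{n≥1} of positive real numbers and a positive integer N ≥ 1 such that q_n · (a_n / a_{n+1}) − q_{n+1} ≥ c_{n+1} for all n ≥ N. -/
/-- Extended Kummer convergence test for series of the form `∑ c_n a_n`. -/
theorem kummer_mul_convergence (a c : ℕ → ℝ) (ha : ∀ n, 1 ≤ n → 0 < a n)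
    (hc : ∀ n, 1 ≤ n → 0 < c n) :
    Summable (fun n : ℕ => c (n + 1) * a (n + 1)) ↔
      ∃ (q : ℕ → ℝ) (N : ℕ), (∀ n, 1 ≤ n → 0 < q n) ∧ 1 ≤ N ∧
        ∀ n, N ≤ n → q n * (a n / a (n + 1)) - q (n + 1) ≥ c (n + 1) := by
  set f : ℕ → ℝ := fun n => c (n + 1) * a (n + 1) with hf
  have hfpos : ∀ n, 0 < f n := fun n =>
    mul_pos (hc (n + 1) (Nat.le_add_left 1 n)) (ha (n + 1) (Nat.le_add_left 1 n))
  constructor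
  · intro h
    -- tail sums
    set t : ℕ → ℝ := fun n => ∑' k, f (n + k) with ht
    have hsum : ∀ n, Summable (fun k => f (n + k)) := fun n =>
      ((summable_nat_add_iff n).2 h).congr (fun k => by simp [add_comm])
    have htpos : ∀ n, 0 < t n := fun n =>
      Summable.tsum_pos (hsum n) (fun i => (hfpos _).le) 0 (hfpos _)
    have hstep : ∀ n, t n = f n + t (n + 1) := by
      intro n
      have h2 : t (n + 1) = ∑' k, f (n + (k + 1)) :=
        tsum_congr fun k => congrArg f (by omega)
      rw [h2]
      exact Summable.tsum_eq_zero_add (hsum n)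
    refine ⟨fun n => t n / a n, 1, fun n hn => div_pos (htpos n) (ha n hn), le_refl 1, ?_⟩
    intro n hn
    have han := ha n hn
    have han1 := ha (n + 1) (Nat.le_add_left 1 n)
    have : t n / a n * (a n / a (n + 1)) - t (n + 1) / a (n + 1)
        = (t n - t (n + 1)) / a (n + 1) := by
      field_simp
    rw [this, hstep n]
    have : f n + t (n + 1) - t (n + 1) = c (n + 1) * a (n + 1) := by simp [hf]
    rw [this, mul_div_assoc, div_self han1.ne', mul_one]
  · rintro ⟨q, N, hq, hN, hK⟩
    have key : Summable (fun n => f (n + N)) := by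
      apply summable_of_sum_range_le (c := q N * a N) (fun n => (hfpos _).le)
      intro m
      have hbd : ∀ i, f (i + N) ≤ q (i + N) * a (i + N) - q (i + N + 1) * a (i + N + 1) := by
        intro i
        have hn : N ≤ i + N := Nat.le_add_left N i
        have h1 := hK (i + N) hn
        have ha1 := ha (i + N + 1) (Nat.le_add_left 1 (i + N))
        have ha0 := ha (i + N) (le_trans hN hn)
        have := mul_le_mul_of_nonneg_right h1 ha1.le
        calc f (i + N) = c (i + N + 1) * a (i + N + 1) := rfl
          _ ≤ (q (i + N) * (a (i + N) / a (i + N + 1)) - q (i + N + 1)) * a (i + N + 1) := this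
          _ = q (i + N) * a (i + N) - q (i + N + 1) * a (i + N + 1) := by
              field_simp
      calc ∑ i ∈ Finset.range m, f (i + N)
          ≤ ∑ i ∈ Finset.range m, (q (i + N) * a (i + N) - q (i + N + 1) * a (i + N + 1)) :=
            Finset.sum_le_sum fun i _ => hbd i
        _ = q N * a N - q (m + N) * a (m + N) := by
            have := Finset.sum_range_sub' (fun i => q (i + N) * a (i + N)) m
            simpa [add_right_comm] using this
        _ ≤ q N * a N := by
            have := mul_pos (hq (m + N) (le_trans hN (Nat.le_add_left N m)))
              (ha (m + N) (le_trans hN (Nat.le_add_left N m)))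
            linarith
    exact (summable_nat_add_iff N).1 key
end

section
/- Let (a_n)_{n≥1} and (c_n)_{n≥1} be sequences of positive real numbers. Suppose there exist a sequence (q_n)_{n≥1} of positive real numbers and a positive integer N such that q_n · (a_n / a_{n+1}) − q_{n+1} ≤ −c_{n+1} for all n ≥ N, and the series ∑ 1/q_n diverges. Then each of the series ∑ a_n, ∑ 1/c_n, ∑ (q_n − c_n) a_n, and ∑ q_n a_n diverges. -/
/-- Extended Kummer divergence test for series `∑ c_n a_n`: divergence of the four
auxiliary series. -/
theorem kummer_mul_divergence_aux (a c : ℕ → ℝ) (ha : ∀ n, 1 ≤ n → 0 < a n)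
    (hc : ∀ n, 1 ≤ n → 0 < c n) (q : ℕ → ℝ) (hq : ∀ n, 1 ≤ n → 0 < q n)
    (N : ℕ) (hN : 1 ≤ N)
    (h : ∀ n, N ≤ n → q n * (a n / a (n + 1)) - q (n + 1) ≤ -c (n + 1))
    (hqdiv : ¬ Summable (fun n : ℕ => 1 / q (n + 1))) :
    ¬ Summable (fun n : ℕ => a (n + 1)) ∧
      ¬ Summable (fun n : ℕ => 1 / c (n + 1)) ∧
      ¬ Summable (fun n : ℕ => (q (n + 1) - c (n + 1)) * a (n + 1)) ∧
      ¬ Summable (fun n : ℕ => q (n + 1) * a (n + 1)) := by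
  have ha1 : ∀ n : ℕ, 0 < a (n + 1) := fun n => ha _ (Nat.succ_le_succ (Nat.zero_le n))
  have hc1 : ∀ n : ℕ, 0 < c (n + 1) := fun n => hc _ (Nat.succ_le_succ (Nat.zero_le n))
  have hq1 : ∀ n : ℕ, 0 < q (n + 1) := fun n => hq _ (Nat.succ_le_succ (Nat.zero_le n))
  -- key step inequality
  have hstep : ∀ n, N ≤ n → q n * a n + c (n + 1) * a (n + 1) ≤ q (n + 1) * a (n + 1) := by
    intro n hn
    have h1 := h n hn
    have hpos := ha1 n
    have h2 : q n * (a n / a (n + 1)) ≤ q (n + 1) - c (n + 1) := by linarith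
    have h3 := mul_le_mul_of_nonneg_right h2 hpos.le
    rw [mul_assoc, div_mul_cancel₀ _ hpos.ne'] at h3
    nlinarith
  set K := q N * a N with hKdef
  have hK : 0 < K := mul_pos (hq N hN) (ha N hN)
  have hmono : ∀ m, N ≤ m → K ≤ q m * a m := by
    intro m hm
    induction m, hm using Nat.le_induction with
    | base => exact le_refl _
    | succ m hm ih =>
      have hs := hstep m hm
      have hca : 0 < c (m + 1) * a (m + 1) := mul_pos (hc1 m) (ha1 m)
      linarith
  -- a diverges
  have hA : ¬ Summable (fun n : ℕ => a (n + 1)) := by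
    intro hs
    apply hqdiv
    rw [← summable_nat_add_iff N]
    have hs' : Summable (fun n : ℕ => (1 / K) * a (n + N + 1)) :=
      ((summable_nat_add_iff N).mpr hs).mul_left _
    apply Summable.of_nonneg_of_le (fun n => le_of_lt (one_div_pos.mpr (hq1 (n + N)))) _ hs'
    intro n
    have hm := hmono (n + N + 1) (by omega)
    have hqm := hq1 (n + N)
    have ham := ha1 (n + N)
    rw [div_le_iff₀ hqm]
    have h1 : (1 / K) * K = 1 := by field_simp
    nlinarith [mul_le_mul_of_nonneg_left hm (le_of_lt (one_div_pos.mpr hK))]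
  -- c < q eventually
  have hcq : ∀ n, N ≤ n → c (n + 1) < q (n + 1) := by
    intro n hn
    have h1 := h n hn
    have : 0 < q n * (a n / a (n + 1)) :=
      mul_pos (hq n (le_trans hN hn)) (div_pos (ha n (le_trans hN hn)) (ha1 n))
    linarith
  have hC : ¬ Summable (fun n : ℕ => 1 / c (n + 1)) := by
    intro hs
    apply hqdiv
    rw [← summable_nat_add_iff N]
    have hs' : Summable (fun n : ℕ => 1 / c (n + N + 1)) := (summable_nat_add_iff N).mpr hs
    apply Summable.of_nonneg_of_le (fun n => le_of_lt (one_div_pos.mpr (hq1 (n + N)))) _ hs'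
    intro n
    exact one_div_le_one_div_of_le (hc1 (n + N)) (le_of_lt (hcq (n + N) (by omega)))
  -- (q - c) * a diverges : terms bounded below by K
  have hQC : ¬ Summable (fun n : ℕ => (q (n + 1) - c (n + 1)) * a (n + 1)) := by
    intro hs
    have h0 := hs.tendsto_atTop_zero
    have hev : ∀ᶠ n in Filter.atTop, (q (n + 1) - c (n + 1)) * a (n + 1) < K :=
      h0.eventually (gt_mem_nhds hK)
    have hev2 : ∀ᶠ n in Filter.atTop, K ≤ (q (n + 1) - c (n + 1)) * a (n + 1) := by
      filter_upwards [Filter.eventually_ge_atTop N] with n hn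
      have h1 := hstep n hn
      have h2 := hmono n hn
      nlinarith
    obtain ⟨n, h1, h2⟩ := (hev.and hev2).exists
    linarith
  have hQ : ¬ Summable (fun n : ℕ => q (n + 1) * a (n + 1)) := by
    intro hs
    have h0 := hs.tendsto_atTop_zero
    have hev : ∀ᶠ n in Filter.atTop, q (n + 1) * a (n + 1) < K :=
      h0.eventually (gt_mem_nhds hK)
    have hev2 : ∀ᶠ n in Filter.atTop, K ≤ q (n + 1) * a (n + 1) := by
      filter_upwards [Filter.eventually_ge_atTop N] with n hn
      exact hmono (n + 1) (by omega)
    obtain ⟨n, h1, h2⟩ := (hev.and hev2).exists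
    linarith
  exact ⟨hA, hC, hQC, hQ⟩
end

section
/- Let (a_n)_{n≥1} and (c_n)_{n≥1} be sequences of positive real numbers. Suppose there exist a sequence (q_n)_{n≥1} of positive real numbers and a positive integer N such that q_n · (a_n / a_{n+1}) − q_{n+1} ≤ −c_{n+1} for all n ≥ N, the series ∑ 1/q_n diverges, and in addition the series ∑ c_n/q_n diverges. Then the series ∑ c_n a_n diverges. -/
/-- Extended Kummer divergence test for series `∑ c_n a_n`. -/
theorem kummer_mul_divergence (a c : ℕ → ℝ) (ha : ∀ n, 1 ≤ n → 0 < a n)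
    (hc : ∀ n, 1 ≤ n → 0 < c n) (q : ℕ → ℝ) (hq : ∀ n, 1 ≤ n → 0 < q n)
    (N : ℕ) (hN : 1 ≤ N)
    (h : ∀ n, N ≤ n → q n * (a n / a (n + 1)) - q (n + 1) ≤ -c (n + 1))
    (hqdiv : ¬ Summable (fun n : ℕ => 1 / q (n + 1)))
    (hcqdiv : ¬ Summable (fun n : ℕ => c (n + 1) / q (n + 1))) :
    ¬ Summable (fun n : ℕ => c (n + 1) * a (n + 1)) := by
  intro hs
  apply hcqdiv
  have hKpos : 0 < q N * a N := mul_pos (hq N hN) (ha N hN)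
  have hmono : ∀ n, N ≤ n → q N * a N ≤ q n * a n := by
    intro n hn
    induction n with
    | zero => omega
    | succ m ih =>
      rcases Nat.lt_or_ge N (m + 1) with h1 | h1
      · have hm : N ≤ m := Nat.lt_succ_iff.mp h1
        refine (ih hm).trans ?_
        have ha1 : 0 < a (m + 1) := ha _ (by omega)
        have hstep := h m hm
        have h2 : q m * (a m / a (m + 1)) * a (m + 1) ≤
            (q (m + 1) - c (m + 1)) * a (m + 1) :=
          mul_le_mul_of_nonneg_right (by linarith) ha1.le
        have h3 : q m * (a m / a (m + 1)) * a (m + 1) = q m * a m := by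
          field_simp
        have hc1 : 0 < c (m + 1) := hc _ (by omega)
        nlinarith
      · have hne : m + 1 = N := by omega
        rw [hne]
  rw [← summable_nat_add_iff N] at hs ⊢
  have hs' := hs.mul_left (1 / (q N * a N))
  refine hs'.of_nonneg_of_le (fun n => ?_) (fun n => ?_)
  · have hc1 : 0 < c (n + N + 1) := hc _ (by omega)
    have hq1 : 0 < q (n + N + 1) := hq _ (by omega)
    positivity
  · have hc1 : 0 < c (n + N + 1) := hc _ (by omega)
    have hq1 : 0 < q (n + N + 1) := hq _ (by omega)
    have ha1 : 0 < a (n + N + 1) := ha _ (by omega)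
    have hK := hmono (n + N + 1) (by omega)
    rw [div_le_iff₀ hq1]
    rw [one_div, ← div_eq_inv_mul, div_mul_eq_mul_div, le_div_iff₀ hKpos]
    nlinarith
end

section
/- Let (a_n)_{n≥1} and (c_n)_{n≥1} be sequences of positive real numbers. Suppose that both series ∑ c_n a_n and ∑ a_n diverge, and suppose that for every positive integer m there exists an integer r ≥ m such that a_m + ⋯ + a_r ≥ c_m a_m + ⋯ + c_r a_r. Then there exists a sequence (q_n)_{n≥1} of positive real numbers, namely q_n = (c_1 a_1 + ⋯ + c_n a_n)/a_n, such that the series ∑ 1/q_n diverges and q_n · (a_n / a_{n+1}) − q_{n+1} ≤ −c_{n+1} for all n ≥ 1. -/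
private lemma icc_shift' (F : ℕ → ℝ) (m r : ℕ) :
    ∑ i ∈ Finset.Icc (m + 1) r, F i = ∑ i ∈ Finset.Ico m r, F (i + 1) := by
  rw [Finset.Icc_add_one_left_eq_Ioc, ← Finset.Ico_add_one_add_one_eq_Ioc, ← Finset.sum_Ico_add' F m r 1]

/-- Converse of the extended Kummer divergence test for series `∑ c_n a_n`:
one may take `q n = (c 1 * a 1 + ⋯ + c n * a n) / a n`. -/
theorem kummer_mul_divergence_converse (a c : ℕ → ℝ) (ha : ∀ n, 1 ≤ n → 0 < a n)
    (hc : ∀ n, 1 ≤ n → 0 < c n)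
    (hcadiv : ¬ Summable (fun n : ℕ => c (n + 1) * a (n + 1)))
    (hadiv : ¬ Summable (fun n : ℕ => a (n + 1)))
    (hblock : ∀ m : ℕ, 1 ≤ m → ∃ r : ℕ, m ≤ r ∧
      (∑ i ∈ Finset.Icc m r, a i) ≥ (∑ i ∈ Finset.Icc m r, c i * a i)) :
    ∃ q : ℕ → ℝ, q = (fun n : ℕ => (∑ i ∈ Finset.Icc 1 n, c i * a i) / a n) ∧
      (∀ n, 1 ≤ n → 0 < q n) ∧
      ¬ Summable (fun n : ℕ => 1 / q (n + 1)) ∧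
      (∀ n, 1 ≤ n → q n * (a n / a (n + 1)) - q (n + 1) ≤ -c (n + 1)) := by
  set S : ℕ → ℝ := fun n => ∑ i ∈ Finset.Icc 1 n, c i * a i with hSdef
  have hSpos : ∀ n, 1 ≤ n → 0 < S n := by
    intro n hn
    apply Finset.sum_pos
    · intro i hi
      rw [Finset.mem_Icc] at hi
      exact mul_pos (hc i hi.1) (ha i hi.1)
    · exact ⟨1, Finset.mem_Icc.2 ⟨le_refl 1, hn⟩⟩
  have hSnonneg : ∀ n, 0 ≤ S n := by
    intro n
    apply Finset.sum_nonneg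
    intro i hi
    rw [Finset.mem_Icc] at hi
    exact le_of_lt (mul_pos (hc i hi.1) (ha i hi.1))
  have hSmono : Monotone S := by
    intro n m hnm
    apply Finset.sum_le_sum_of_subset_of_nonneg (Finset.Icc_subset_Icc_right hnm)
    intro i hi _
    rw [Finset.mem_Icc] at hi
    exact le_of_lt (mul_pos (hc i hi.1) (ha i hi.1))
  -- S n + c(n+1)a(n+1) = S (n+1)
  have hSsucc : ∀ n, S (n + 1) = S n + c (n + 1) * a (n + 1) := by
    intro n
    simp only [hSdef]
    rw [Finset.sum_Icc_succ_top (by omega : 1 ≤ n + 1)]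
  -- S tends to atTop
  have hStend : Filter.Tendsto S Filter.atTop Filter.atTop := by
    have h0 : ∀ n : ℕ, 0 ≤ c (n + 1) * a (n + 1) := fun n =>
      le_of_lt (mul_pos (hc (n + 1) (by omega)) (ha (n + 1) (by omega)))
    have := (not_summable_iff_tendsto_nat_atTop_of_nonneg h0).1 hcadiv
    have heq : (fun n : ℕ => ∑ i ∈ Finset.range n, c (i + 1) * a (i + 1)) = S := by
      funext n
      simp only [hSdef]
      rw [show (1 : ℕ) = 0 + 1 by rfl, icc_shift' (fun i => c i * a i) 0 n,
        ← Finset.range_eq_Ico]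
    rwa [heq] at this
  refine ⟨fun n => S n / a n, rfl, ?_, ?_, ?_⟩
  · intro n hn
    exact div_pos (hSpos n hn) (ha n hn)
  · -- the divergence of ∑ 1/q(n+1)
    intro hsum
    have hgpos : ∀ n : ℕ, 0 < a (n + 1) / S (n + 1) :=
      fun n => div_pos (ha (n + 1) (by omega)) (hSpos (n + 1) (by omega))
    have hform : (fun n : ℕ => 1 / (S (n + 1) / a (n + 1))) =
        fun n : ℕ => a (n + 1) / S (n + 1) := by
      funext n; rw [one_div_div]
    rw [hform] at hsum
    set g : ℕ → ℝ := fun n => a (n + 1) / S (n + 1) with hgdef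
    set L : ℝ := ∑' n, g n with hLdef
    have hGle : ∀ n, ∑ i ∈ Finset.range n, g i ≤ L :=
      fun n => Summable.sum_le_tsum (Finset.range n) (fun i _ => le_of_lt (hgpos i)) hsum
    obtain ⟨N, hN⟩ : ∃ N, L - 1/2 < ∑ i ∈ Finset.range N, g i := by
      have := hsum.hasSum.tendsto_sum_nat
      exact (this.eventually (eventually_gt_nhds (by linarith : L - 1/2 < L))).exists
    -- chained blocks
    have key : ∀ k : ℕ, ∃ r : ℕ, N + 1 + k ≤ r + 1 ∧ N + 1 ≤ r ∧
        (∑ i ∈ Finset.Icc (N + 1) r, c i * a i) ≤ ∑ i ∈ Finset.Icc (N + 1) r, a i := by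
      intro k
      induction k with
      | zero =>
        obtain ⟨r, hr1, hr2⟩ := hblock (N + 1) (by omega)
        exact ⟨r, by omega, hr1, hr2⟩
      | succ k ih =>
        obtain ⟨r, h1, h2, h3⟩ := ih
        obtain ⟨r', h1', h2'⟩ := hblock (r + 1) (by omega)
        refine ⟨r', by omega, by omega, ?_⟩
        have hsplit : ∀ F : ℕ → ℝ,
            (∑ i ∈ Finset.Icc (N + 1) r, F i) + ∑ i ∈ Finset.Icc (r + 1) r', F i =
              ∑ i ∈ Finset.Icc (N + 1) r', F i := by
          intro F
          rw [Finset.Icc_add_one_left_eq_Ioc, Finset.Icc_add_one_left_eq_Ioc, Finset.Icc_add_one_left_eq_Ioc]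
          exact Finset.sum_Ioc_consecutive F (by omega) (by omega)
        rw [← hsplit, ← hsplit]
        exact add_le_add h3 h2'
    obtain ⟨K, hK⟩ := Filter.eventually_atTop.1 (hStend.eventually_ge_atTop (2 * S N))
    obtain ⟨r, hr1, hr2, hr3⟩ := key K
    have hSr2 : 2 * S N ≤ S r := hK r (by omega)
    have hSrpos : 0 < S r := hSpos r (by omega)
    -- block sum of c*a equals S r - S N
    have hblocksum : (∑ i ∈ Finset.Icc (N + 1) r, c i * a i) = S r - S N := by
      have : S N + ∑ i ∈ Finset.Icc (N + 1) r, c i * a i = S r := by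
        simp only [hSdef]
        rw [show Finset.Icc 1 N = Finset.Icc (0 + 1) N from rfl, Finset.Icc_add_one_left_eq_Ioc,
          Finset.Icc_add_one_left_eq_Ioc, show Finset.Icc 1 r = Finset.Icc (0 + 1) r from rfl,
          Finset.Icc_add_one_left_eq_Ioc]
        exact Finset.sum_Ioc_consecutive _ (by omega) (by omega)
      linarith
    -- lower bound the tail block of g
    have hstep1 : (S r - S N) / S r ≤ ∑ i ∈ Finset.Icc (N + 1) r, a i / S r := by
      rw [← Finset.sum_div]
      exact (div_le_div_iff_of_pos_right hSrpos).2 (by linarith [hr3, hblocksum])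
    have hstep2 : (∑ i ∈ Finset.Icc (N + 1) r, a i / S r) ≤
        ∑ i ∈ Finset.Icc (N + 1) r, a i / S i := by
      apply Finset.sum_le_sum
      intro i hi
      rw [Finset.mem_Icc] at hi
      exact div_le_div_of_nonneg_left (le_of_lt (ha i (by omega))) (hSpos i (by omega))
        (hSmono hi.2)
    have hstep3 : (∑ i ∈ Finset.Icc (N + 1) r, a i / S i) = ∑ i ∈ Finset.Ico N r, g i := by
      rw [icc_shift' (fun i => a i / S i) N r]
    have hstep4 : (∑ i ∈ Finset.Ico N r, g i) =
        (∑ i ∈ Finset.range r, g i) - ∑ i ∈ Finset.range N, g i := by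
      rw [Finset.range_eq_Ico, Finset.range_eq_Ico, eq_sub_iff_add_eq, add_comm]
      exact Finset.sum_Ico_consecutive g (by omega) (by omega)
    have hhalf : 1 / 2 ≤ (S r - S N) / S r := by
      rw [le_div_iff₀ hSrpos]
      linarith [hSnonneg N]
    have hGr : ∑ i ∈ Finset.range r, g i ≤ L := hGle r
    linarith
  · intro n hn
    have han : a n ≠ 0 := ne_of_gt (ha n hn)
    have han1 : a (n + 1) ≠ 0 := ne_of_gt (ha (n + 1) (by omega))
    show S n / a n * (a n / a (n + 1)) - S (n + 1) / a (n + 1) ≤ -c (n + 1)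
    rw [hSsucc n]
    have : S n / a n * (a n / a (n + 1)) = S n / a (n + 1) := by
      field_simp
    rw [this]
    rw [div_sub_div_same, div_le_iff₀ (ha (n + 1) (by omega))]
    ring_nf
    nlinarith [ha (n+1) (by omega : 1 ≤ n+1)]
end

section
/- Let (a_n)_{n≥1} and (c_n)_{n≥1} be sequences of positive real numbers, and define R_n^- = n·(a_n/a_{n+1}) − (n+1) − c_{n+1}. If liminf_{n→∞} R_n^- > 0, then the series ∑ c_n a_n converges. -/
open Filter

/-- Generalized Raabe test, convergence part. -/
theorem raabe_mul_convergence (a c : ℕ → ℝ) (ha : ∀ n, 1 ≤ n → 0 < a n)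
    (hc : ∀ n, 1 ≤ n → 0 < c n)
    (h : 0 < liminf (fun n : ℕ =>
        (((n : ℝ) * (a n / a (n + 1)) - (n + 1) - c (n + 1) : ℝ) : EReal)) atTop) :
    Summable (fun n : ℕ => c (n + 1) * a (n + 1)) := by
  have hev : ∀ᶠ n : ℕ in atTop,
      (0 : EReal) < (((n : ℝ) * (a n / a (n + 1)) - (n + 1) - c (n + 1) : ℝ) : EReal) :=
    eventually_lt_of_lt_liminf h
  rw [eventually_atTop] at hev
  obtain ⟨N0, hN0⟩ := hev
  set N := max N0 1 with hN
  have hN1 : 1 ≤ N := le_max_right _ _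
  -- key pointwise estimate
  have key : ∀ n, N ≤ n → c (n + 1) * a (n + 1) ≤ (n : ℝ) * a n - (n + 1) * a (n + 1) := by
    intro n hn
    have hpos := hN0 n (le_trans (le_max_left _ _) hn)
    have hpos' : (0 : ℝ) < (n : ℝ) * (a n / a (n + 1)) - (n + 1) - c (n + 1) := by
      exact_mod_cast hpos
    have han1 : 0 < a (n + 1) := ha _ (by omega)
    have h1 : c (n + 1) ≤ (n : ℝ) * (a n / a (n + 1)) - (n + 1) := by linarith
    have h2 := mul_le_mul_of_nonneg_right h1 han1.le
    have h3 : ((n : ℝ) * (a n / a (n + 1)) - (n + 1)) * a (n + 1)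
        = (n : ℝ) * a n - (n + 1) * a (n + 1) := by
      field_simp
    linarith [h2, h3 ▸ h2]
  have hnonneg : ∀ n : ℕ, 0 ≤ c (n + 1) * a (n + 1) := fun n =>
    (mul_pos (hc _ (by omega)) (ha _ (by omega))).le
  -- telescoping bound on Ico sums
  have tel : ∀ n, N ≤ n →
      (∑ i ∈ Finset.Ico N n, c (i + 1) * a (i + 1)) + (n : ℝ) * a n ≤ (N : ℝ) * a N := by
    intro n hn
    induction n, hn using Nat.le_induction with
    | base => simp
    | succ n hn ih =>
      rw [Finset.sum_Ico_succ_top hn]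
      have := key n hn
      push_cast
      push_cast at this ih
      linarith
  -- bounded partial sums
  apply summable_of_sum_range_le (c := (∑ i ∈ Finset.range N, c (i + 1) * a (i + 1)) + (N : ℝ) * a N)
    hnonneg
  intro n
  rcases le_or_gt n N with hle | hlt
  · have hmono : (∑ i ∈ Finset.range n, c (i + 1) * a (i + 1))
        ≤ ∑ i ∈ Finset.range N, c (i + 1) * a (i + 1) :=
      Finset.sum_le_sum_of_subset_of_nonneg (Finset.range_subset_range.mpr hle)
        (fun i _ _ => hnonneg i)
    have haN : 0 ≤ (N : ℝ) * a N := by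
      have := ha N hN1
      positivity
    linarith
  · have hsplit : (∑ i ∈ Finset.range n, c (i + 1) * a (i + 1))
        = (∑ i ∈ Finset.range N, c (i + 1) * a (i + 1))
          + ∑ i ∈ Finset.Ico N n, c (i + 1) * a (i + 1) := by
      rw [Finset.range_eq_Ico, Finset.range_eq_Ico,
        Finset.sum_Ico_consecutive _ (Nat.zero_le _) hlt.le]
    have hbd := tel n hlt.le
    have hpos : 0 < (n : ℝ) * a n :=
      mul_pos (by exact_mod_cast (show 0 < n by omega)) (ha n (by omega))
    linarith
end

section
/- Let (a_n)_{n≥1} and (c_n)_{n≥1} be sequences of positive real numbers, and define R_n^+ = n·(a_n/a_{n+1}) − (n+1) + c_{n+1}. If limsup_{n→∞} R_n^+ < 0 and the series ∑ c_n/n diverges, then the series ∑ c_n a_n diverges. -/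
open Filter

/-- Generalized Raabe test, divergence part. -/
theorem raabe_mul_divergence (a c : ℕ → ℝ) (ha : ∀ n, 1 ≤ n → 0 < a n)
    (hc : ∀ n, 1 ≤ n → 0 < c n)
    (h : limsup (fun n : ℕ =>
        (((n : ℝ) * (a n / a (n + 1)) - (n + 1) + c (n + 1) : ℝ) : EReal)) atTop < 0)
    (hcn : ¬ Summable (fun n : ℕ => c (n + 1) / (n + 1 : ℝ))) :
    ¬ Summable (fun n : ℕ => c (n + 1) * a (n + 1)) := by
  have hev : ∀ᶠ n : ℕ in atTop,
      (((n : ℝ) * (a n / a (n + 1)) - (n + 1) + c (n + 1) : ℝ) : EReal) < 0 :=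
    eventually_lt_of_limsup_lt h
  obtain ⟨N₀, hN₀⟩ := eventually_atTop.mp hev
  set N := max N₀ 1 with hNdef
  have hN1 : 1 ≤ N := le_max_right _ _
  have key : ∀ n, N ≤ n → (n : ℝ) * a n + c (n+1) * a (n+1) ≤ ((n : ℝ) + 1) * a (n+1) := by
    intro n hn
    have h1 : 1 ≤ n := le_trans hN1 hn
    have hpos : 0 < a (n+1) := ha _ (le_trans h1 (Nat.le_succ n))
    have hlt : ((n : ℝ) * (a n / a (n + 1)) - ((n : ℝ) + 1) + c (n + 1)) < 0 := by
      have := hN₀ n (le_trans (le_max_left _ _) hn)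
      exact_mod_cast this
    have h2 : (n : ℝ) * a n / a (n+1) < ((n:ℝ) + 1) - c (n+1) := by
      rw [mul_div_assoc]; linarith
    have h3 := (div_lt_iff₀ hpos).mp h2
    nlinarith
  set C := (N : ℝ) * a N with hC
  have hCpos : 0 < C := mul_pos (by exact_mod_cast hN1) (ha N hN1)
  have hmono : ∀ n, N ≤ n → C ≤ (n : ℝ) * a n := by
    intro n hn
    induction n, hn using Nat.le_induction with
    | base => exact le_refl _
    | succ n hn ih =>
      have hca : 0 < c (n+1) * a (n+1) :=
        mul_pos (hc _ (Nat.le_add_left 1 n)) (ha _ (Nat.le_add_left 1 n))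
      have := key n hn
      push_cast
      linarith
  intro hs
  apply hcn
  have hs2 : Summable (fun n : ℕ => (1/C) * (c (n + N + 1) * a (n + N + 1))) :=
    ((summable_nat_add_iff N).2 hs).mul_left _
  have hs3 : Summable (fun n : ℕ => (fun m : ℕ => c (m + 1) / (m + 1 : ℝ)) (n + N)) := by
    apply Summable.of_nonneg_of_le _ _ hs2
    · intro n
      have hcp := hc (n + N + 1) (Nat.le_add_left 1 _)
      positivity
    · intro n
      simp only
      have hm : N ≤ n + N + 1 := by omega
      have hmon := hmono (n + N + 1) hm
      have hcp := hc (n + N + 1) (Nat.le_add_left 1 _)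
      have hap := ha (n + N + 1) (Nat.le_add_left 1 _)
      have hden : (0:ℝ) < ((n + N : ℕ) : ℝ) + 1 := by positivity
      rw [div_le_iff₀ hden]
      have hcast : ((n + N + 1 : ℕ) : ℝ) = ((n + N : ℕ) : ℝ) + 1 := by push_cast; ring
      rw [hcast] at hmon
      rw [one_div]
      have h1 : c (n + N + 1) * C ≤ c (n + N + 1) * ((((n + N : ℕ) : ℝ) + 1) * a (n + N + 1)) :=
        mul_le_mul_of_nonneg_left hmon hcp.le
      nlinarith [mul_inv_cancel₀ hCpos.ne', inv_pos.mpr hCpos,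
        mul_le_mul_of_nonneg_left h1 (inv_pos.mpr hCpos).le]
  exact (summable_nat_add_iff N).1 hs3
end

section
/- Let (a_n)_{n≥1} and (c_n)_{n≥1} be sequences of positive real numbers. Suppose there exist a sequence (θ_n) of real numbers and a constant θ > 1 with θ_n ≥ θ for all n ≥ 1, such that a_n/a_{n+1} > 1 + 1/n + (θ_n + c_{n+1})/(n·ln n) for all n ≥ 2. Then the series ∑ c_n a_n converges. -/
/-- Generalized Bertrand test, convergence part. -/
theorem bertrand_mul_convergence (a c : ℕ → ℝ) (ha : ∀ n, 1 ≤ n → 0 < a n)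
    (hc : ∀ n, 1 ≤ n → 0 < c n) (θ : ℕ → ℝ) (θ₀ : ℝ) (hθ₀ : 1 < θ₀)
    (hθ : ∀ n, 1 ≤ n → θ₀ ≤ θ n)
    (h : ∀ n, 2 ≤ n → a n / a (n + 1) >
      1 + 1 / (n : ℝ) + (θ n + c (n + 1)) / ((n : ℝ) * Real.log n)) :
    Summable (fun n : ℕ => c (n + 1) * a (n + 1)) := by
  obtain ⟨N0, hN0⟩ := exists_nat_gt (θ₀ - 1)⁻¹
  set N := max N0 2 with hNdef
  have hN2 : 2 ≤ N := le_max_right _ _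
  set b : ℕ → ℝ := fun n => (n : ℝ) * Real.log n * a n with hb
  have hbnonneg : ∀ n, 1 ≤ n → 0 ≤ b n := by
    intro n hn
    exact mul_nonneg (mul_nonneg (Nat.cast_nonneg n) (Real.log_natCast_nonneg n))
      (ha n hn).le
  have key : ∀ n, N ≤ n → c (n + 1) * a (n + 1) ≤ b n - b (n + 1) := by
    intro n hn
    have hn2 : 2 ≤ n := le_trans hN2 hn
    have hn1 : 1 ≤ n := by omega
    have hnR : (1 : ℝ) < n := by exact_mod_cast hn2.trans_lt' one_lt_two
    have hnpos : (0 : ℝ) < n := by positivity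
    have hlog : 0 < Real.log n := Real.log_pos hnR
    have ha1 : 0 < a (n + 1) := ha (n + 1) (by omega)
    have hD : (0 : ℝ) < (n : ℝ) * Real.log n := mul_pos hnpos hlog
    -- from the hypothesis
    have h1 : (1 + 1 / (n : ℝ) + (θ n + c (n + 1)) / ((n : ℝ) * Real.log n)) * a (n + 1)
        < a n := (lt_div_iff₀ ha1).1 (h n hn2)
    have h2 : ((n : ℝ) * Real.log n + Real.log n + θ n + c (n + 1)) * a (n + 1)
        < (n : ℝ) * Real.log n * a n := by
      have := mul_lt_mul_of_pos_left h1 hD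
      calc ((n : ℝ) * Real.log n + Real.log n + θ n + c (n + 1)) * a (n + 1)
          = (n : ℝ) * Real.log n *
            ((1 + 1 / (n : ℝ) + (θ n + c (n + 1)) / ((n : ℝ) * Real.log n)) * a (n + 1)) := by
            field_simp
            ring
        _ < (n : ℝ) * Real.log n * a n := this
    -- coefficient bound : (n+1) log (n+1) ≤ n log n + log n + θ n
    have hlogle : Real.log ((n : ℝ) + 1) ≤ Real.log n + 1 / n := by
      have h3 : Real.log (((n : ℝ) + 1) / n) ≤ ((n : ℝ) + 1) / n - 1 :=
        Real.log_le_sub_one_of_pos (by positivity)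
      rw [Real.log_div (by positivity) (by positivity)] at h3
      have : ((n : ℝ) + 1) / n - 1 = 1 / n := by field_simp; ring
      linarith [this ▸ h3]
    have hinv : 1 / (n : ℝ) < θ₀ - 1 := by
      have h4 : (θ₀ - 1)⁻¹ < (n : ℝ) := by
        have : (N0 : ℝ) ≤ n := by exact_mod_cast le_trans (le_max_left N0 2) hn
        linarith
      rw [one_div]
      exact (inv_lt_comm₀ (by linarith) hnpos).1 h4
    have hθn : θ₀ ≤ θ n := hθ n hn1
    have hcoef : ((n : ℝ) + 1) * Real.log ((n : ℝ) + 1)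
        ≤ (n : ℝ) * Real.log n + Real.log n + θ n := by
      have := mul_le_mul_of_nonneg_left hlogle (by positivity : (0:ℝ) ≤ (n : ℝ) + 1)
      have hexp : ((n : ℝ) + 1) * (Real.log n + 1 / n)
          = (n : ℝ) * Real.log n + Real.log n + (1 + 1 / n) := by
        field_simp
      nlinarith
    -- conclude
    have hb1 : b (n + 1) = ((n : ℝ) + 1) * Real.log ((n : ℝ) + 1) * a (n + 1) := by
      simp [hb]
    have hb2 : b (n + 1) ≤ ((n : ℝ) * Real.log n + Real.log n + θ n) * a (n + 1) := by
      rw [hb1]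
      exact mul_le_mul_of_nonneg_right hcoef ha1.le
    have hbn : b n = (n : ℝ) * Real.log n * a n := rfl
    nlinarith
  -- partial sums are bounded
  have hbound : ∀ k, (∑ i ∈ Finset.range k, c (i + N + 1) * a (i + N + 1)) + b (N + k) ≤ b N := by
    intro k
    induction k with
    | zero => simp
    | succ k ih =>
      rw [Finset.sum_range_succ]
      have hk := key (k + N) (Nat.le_add_left N k)
      rw [show N + (k + 1) = k + N + 1 from by omega]
      rw [show N + k = k + N from by omega] at ih
      linarith
  have hsum : Summable (fun n => c (n + N + 1) * a (n + N + 1)) := by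
    apply summable_of_sum_range_le (c := b N)
    · intro n
      exact le_of_lt (mul_pos (hc _ (by omega)) (ha _ (by omega)))
    · intro k
      have := hbound k
      have := hbnonneg (N + k) (by omega)
      linarith
  have : Summable (fun n => c (n + N + 1) * a (n + N + 1)) ↔
      Summable (fun n : ℕ => c (n + 1) * a (n + 1)) := by
    have := summable_nat_add_iff (f := fun n : ℕ => c (n + 1) * a (n + 1)) N
    simpa using this
  exact this.1 hsum
end

section
/- Let (a_n)_{n≥1} and (c_n)_{n≥1} be sequences of positive real numbers. Suppose there exist a sequence (θ_n) of real numbers and a constant θ < 1 with θ_n ≤ θ for all n ≥ 1, such that a_n/a_{n+1} ≤ 1 + 1/n + (θ_n − c_{n+1})/(n·ln n) for all n ≥ 2, and suppose the series ∑ c_n/(n·ln n) diverges. Then the series ∑ c_n a_n diverges. -/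
/-- Generalized Bertrand test, divergence part. -/
theorem bertrand_mul_divergence (a c : ℕ → ℝ) (ha : ∀ n, 1 ≤ n → 0 < a n)
    (hc : ∀ n, 1 ≤ n → 0 < c n) (θ : ℕ → ℝ) (θ₀ : ℝ) (hθ₀ : θ₀ < 1)
    (hθ : ∀ n, 1 ≤ n → θ n ≤ θ₀)
    (h : ∀ n, 2 ≤ n → a n / a (n + 1) ≤
      1 + 1 / (n : ℝ) + (θ n - c (n + 1)) / ((n : ℝ) * Real.log n))
    (hcdiv : ¬ Summable (fun n : ℕ => c (n + 1) / ((n + 1 : ℝ) * Real.log (n + 1)))) :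
    ¬ Summable (fun n : ℕ => c (n + 1) * a (n + 1)) := by
  intro hS
  apply hcdiv
  set K : ℝ := 2 * Real.log 2 * a 2 with hKdef
  have hK : 0 < K :=
    mul_pos (mul_pos two_pos (Real.log_pos one_lt_two)) (ha 2 (by omega))
  -- key monotonicity step
  have key : ∀ n : ℕ, 2 ≤ n →
      (n : ℝ) * Real.log n * a n ≤ ((n : ℝ) + 1) * Real.log ((n : ℝ) + 1) * a (n + 1) := by
    intro n hn
    have hN : (2 : ℝ) ≤ (n : ℝ) := by exact_mod_cast hn
    have hN0 : (0 : ℝ) < n := by linarith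
    have hlog : 0 < Real.log n := Real.log_pos (by linarith)
    have hA : 0 < a (n + 1) := ha _ (by omega)
    have hA0 : 0 < a n := ha _ (by omega)
    have h2 : a n ≤ (1 + 1 / (n : ℝ) + (θ n - c (n + 1)) / ((n : ℝ) * Real.log n)) * a (n + 1) :=
      (div_le_iff₀ hA).mp (h n hn)
    have e : (n : ℝ) * Real.log n *
        (1 + 1 / (n : ℝ) + (θ n - c (n + 1)) / ((n : ℝ) * Real.log n)) =
        (n : ℝ) * Real.log n + Real.log n + θ n - c (n + 1) := by
      field_simp
      ring
    have h3 : (n : ℝ) * Real.log n * a n ≤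
        ((n : ℝ) * Real.log n + Real.log n + θ n - c (n + 1)) * a (n + 1) := by
      have h4 := mul_le_mul_of_nonneg_left h2 (le_of_lt (mul_pos hN0 hlog))
      calc (n : ℝ) * Real.log n * a n ≤ (n : ℝ) * Real.log n *
            ((1 + 1 / (n : ℝ) + (θ n - c (n + 1)) / ((n : ℝ) * Real.log n)) * a (n + 1)) := h4
        _ = ((n : ℝ) * Real.log n + Real.log n + θ n - c (n + 1)) * a (n + 1) := by
            rw [← mul_assoc, e]
    have hlogkey : 1 ≤ ((n : ℝ) + 1) * (Real.log ((n : ℝ) + 1) - Real.log n) := by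
      have hx : (0 : ℝ) < (n : ℝ) / ((n : ℝ) + 1) := by positivity
      have hle := Real.log_le_sub_one_of_pos hx
      rw [Real.log_div (by linarith) (by linarith)] at hle
      have h4 : 1 / ((n : ℝ) + 1) ≤ Real.log ((n : ℝ) + 1) - Real.log n := by
        have he : (n : ℝ) / ((n : ℝ) + 1) - 1 = -(1 / ((n : ℝ) + 1)) := by
          field_simp
          ring
        linarith [he ▸ hle]
      calc (1 : ℝ) = ((n : ℝ) + 1) * (1 / ((n : ℝ) + 1)) := by field_simp
        _ ≤ _ := mul_le_mul_of_nonneg_left h4 (by linarith)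
    have hθn := hθ n (by omega)
    have hcpos := hc (n + 1) (by omega)
    have h5 : (n : ℝ) * Real.log n + Real.log n + θ n - c (n + 1) ≤
        ((n : ℝ) + 1) * Real.log ((n : ℝ) + 1) := by nlinarith [hlogkey]
    calc (n : ℝ) * Real.log n * a n
        ≤ ((n : ℝ) * Real.log n + Real.log n + θ n - c (n + 1)) * a (n + 1) := h3
      _ ≤ ((n : ℝ) + 1) * Real.log ((n : ℝ) + 1) * a (n + 1) :=
          mul_le_mul_of_nonneg_right h5 hA.le
  -- lower bound on D n
  have lower : ∀ n : ℕ, 2 ≤ n → K ≤ (n : ℝ) * Real.log n * a n := by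
    intro n hn
    induction n with
    | zero => omega
    | succ m ih =>
      rcases Nat.lt_or_ge m 2 with hm | hm
      · have hm1 : m = 1 := by omega
        subst hm1
        push_cast
        norm_num
        exact hKdef.le
      · have h1 := key m hm
        have h2 := ih hm
        push_cast
        linarith
  -- comparison
  apply Summable.of_nonneg_of_le (f := fun n => (1 / K) * (c (n + 1) * a (n + 1)))
  · intro n
    rcases Nat.eq_zero_or_pos n with hn | hn
    · subst hn; simp [Real.log_one]
    · have hc1 := hc (n + 1) (by omega)
      have hl : 0 < Real.log ((n : ℝ) + 1) := Real.log_pos (by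
        have : (1 : ℝ) ≤ (n : ℝ) := by exact_mod_cast hn
        linarith)
      positivity
  · intro n
    rcases Nat.eq_zero_or_pos n with hn | hn
    · subst hn
      simp [Real.log_one]
      have h1 := hc 1 le_rfl
      have h2 := ha 1 le_rfl
      positivity
    · have hc1 := hc (n + 1) (by omega)
      have hA := ha (n + 1) (by omega)
      have hn1 : (1 : ℝ) ≤ (n : ℝ) := by exact_mod_cast hn
      have hl : 0 < Real.log ((n : ℝ) + 1) := Real.log_pos (by linarith)
      have hB : 0 < ((n : ℝ) + 1) * Real.log ((n : ℝ) + 1) := by positivity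
      have hBA : K ≤ ((n : ℝ) + 1) * Real.log ((n : ℝ) + 1) * a (n + 1) := by
        have := lower (n + 1) (by omega)
        push_cast at this
        linarith
      have hg : (1 / K) * (c (n + 1) * a (n + 1)) = c (n + 1) * a (n + 1) / K := by ring
      rw [hg, div_le_div_iff₀ hB hK]
      nlinarith [mul_le_mul_of_nonneg_left hBA hc1.le]
  · exact hS.mul_left _
end

section
/- Let (a_n)_{n≥1} and (c_n)_{n≥1} be sequences of positive real numbers, let γ ≥ 1 be a real number, and let (θ_n) be a bounded sequence of real numbers. Suppose there exists μ ∈ ℝ such that θ_n ≥ (1 − μ)·n^{γ−1} for all sufficiently large n, and suppose a_n/a_{n+1} ≥ 1 + c_{n+1}/n + μ/n + θ_n/n^{γ} for all sufficiently large n. Then the series ∑ c_n a_n converges. -/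
/-- Generalized Gauss test, convergence part. -/
theorem gauss_mul_convergence (a c : ℕ → ℝ) (ha : ∀ n, 1 ≤ n → 0 < a n)
    (hc : ∀ n, 1 ≤ n → 0 < c n) (γ : ℝ) (hγ : 1 ≤ γ)
    (θ : ℕ → ℝ) (hθbdd : ∃ M : ℝ, ∀ n, |θ n| ≤ M)
    (h : ∃ μ : ℝ,
      (∃ N : ℕ, ∀ n, N ≤ n → (1 - μ) * (n : ℝ) ^ (γ - 1) ≤ θ n) ∧
      (∃ N : ℕ, ∀ n, N ≤ n → a n / a (n + 1) ≥
        1 + c (n + 1) / (n : ℝ) + μ / (n : ℝ) + θ n / (n : ℝ) ^ γ)) :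
    Summable (fun n : ℕ => c (n + 1) * a (n + 1)) := by
  obtain ⟨μ, ⟨N1, hθ⟩, ⟨N2, hA⟩⟩ := h
  set N := max (max N1 N2) 1 with hN
  -- key pointwise inequality
  have key : ∀ n, N ≤ n → c (n + 1) * a (n + 1) ≤
      (n : ℝ) * a n - ((n : ℝ) + 1) * a (n + 1) := by
    intro n hn
    have hn1 : 1 ≤ n := le_trans (le_max_right _ _) hn
    have hnN1 : N1 ≤ n := le_trans (le_max_left _ _) (le_trans (le_max_left _ _) hn)
    have hnN2 : N2 ≤ n := le_trans (le_max_right _ _) (le_trans (le_max_left _ _) hn)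
    have hn0 : (0 : ℝ) < n := by exact_mod_cast hn1
    have ha' : 0 < a (n + 1) := ha (n + 1) (by omega)
    have hrp : (0 : ℝ) < (n : ℝ) ^ γ := Real.rpow_pos_of_pos hn0 γ
    have hpow : (n : ℝ) ^ (γ - 1) * n = (n : ℝ) ^ γ := by
      rw [← Real.rpow_add_one hn0.ne' (γ - 1)]; ring_nf
    have hkey : (1 - μ) / (n : ℝ) ≤ θ n / (n : ℝ) ^ γ := by
      rw [div_le_div_iff₀ hn0 hrp]
      calc (1 - μ) * (n : ℝ) ^ γ = ((1 - μ) * (n : ℝ) ^ (γ - 1)) * n := by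
            rw [mul_assoc, hpow]
        _ ≤ θ n * n := mul_le_mul_of_nonneg_right (hθ n hnN1) hn0.le
    have h2 : 1 + c (n + 1) / (n : ℝ) + 1 / (n : ℝ) ≤ a n / a (n + 1) := by
      have := hA n hnN2
      have hsum : μ / (n : ℝ) + (1 - μ) / (n : ℝ) = 1 / (n : ℝ) := by ring
      linarith
    have h3 : (1 + c (n + 1) / (n : ℝ) + 1 / (n : ℝ)) * a (n + 1) ≤ a n := by
      rw [← le_div_iff₀ ha']; exact h2
    have h4 : (n : ℝ) * ((1 + c (n + 1) / (n : ℝ) + 1 / (n : ℝ)) * a (n + 1)) =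
        ((n : ℝ) + 1) * a (n + 1) + c (n + 1) * a (n + 1) := by
      field_simp; ring
    nlinarith [mul_le_mul_of_nonneg_left h3 hn0.le]
  -- summability via telescoping bound
  rw [← summable_nat_add_iff N]
  apply summable_of_sum_range_le (c := (N : ℝ) * a N)
  · intro n
    have h1 : (1 : ℕ) ≤ n + N + 1 := by omega
    exact mul_nonneg (hc _ h1).le (ha _ h1).le
  · intro m
    have tele : ∀ i ∈ Finset.range m,
        c (i + N + 1) * a (i + N + 1) ≤
          (fun k => ((k + N : ℕ) : ℝ) * a (k + N)) i
            - (fun k => ((k + N : ℕ) : ℝ) * a (k + N)) (i + 1) := by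
      intro i _
      have := key (i + N) (by omega)
      simp only
      push_cast
      push_cast at this
      convert this using 2 <;> ring_nf
    calc ∑ i ∈ Finset.range m, c (i + N + 1) * a (i + N + 1)
        ≤ ∑ i ∈ Finset.range m,
            ((fun k => ((k + N : ℕ) : ℝ) * a (k + N)) i
              - (fun k => ((k + N : ℕ) : ℝ) * a (k + N)) (i + 1)) :=
          Finset.sum_le_sum tele
      _ = ((0 + N : ℕ) : ℝ) * a (0 + N) - ((m + N : ℕ) : ℝ) * a (m + N) := by
          rw [Finset.sum_range_sub' (fun k => ((k + N : ℕ) : ℝ) * a (k + N)) m]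
      _ ≤ (N : ℝ) * a N := by
          have hm1 : 1 ≤ m + N := by omega
          have := ha (m + N) hm1
          have : (0:ℝ) ≤ ((m + N : ℕ) : ℝ) * a (m + N) := by positivity
          simp only [Nat.zero_add]
          linarith
end

section
/- Let (a_n)_{n≥1} and (c_n)_{n≥1} be sequences of positive real numbers, let γ ≥ 1 be a real number, and let (θ_n) be a bounded sequence of real numbers. Suppose there exists μ ∈ ℝ such that θ_n ≤ (1 − μ)·n^{γ−1} for all sufficiently large n, suppose the series ∑ c_n/n diverges, and suppose a_n/a_{n+1} ≤ 1 − c_{n+1}/n + μ/n + θ_n/n^{γ} for all sufficiently large n. Then the series ∑ c_n a_n diverges. -/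
/-- Generalized Gauss test, divergence part. -/
theorem gauss_mul_divergence (a c : ℕ → ℝ) (ha : ∀ n, 1 ≤ n → 0 < a n)
    (hc : ∀ n, 1 ≤ n → 0 < c n) (γ : ℝ) (hγ : 1 ≤ γ)
    (θ : ℕ → ℝ) (hθbdd : ∃ M : ℝ, ∀ n, |θ n| ≤ M)
    (h : ∃ μ : ℝ,
      (∃ N : ℕ, ∀ n, N ≤ n → θ n ≤ (1 - μ) * (n : ℝ) ^ (γ - 1)) ∧
      (∃ N : ℕ, ∀ n, N ≤ n → a n / a (n + 1) ≤
        1 - c (n + 1) / (n : ℝ) + μ / (n : ℝ) + θ n / (n : ℝ) ^ γ))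
    (hcdiv : ¬ Summable (fun n : ℕ => c (n + 1) / (n + 1 : ℝ))) :
    ¬ Summable (fun n : ℕ => c (n + 1) * a (n + 1)) := by
  obtain ⟨μ, ⟨N1, h1⟩, ⟨N2, h2⟩⟩ := h
  set N : ℕ := max (max N1 N2) 1 with hN
  have hN1 : 1 ≤ N := le_max_right _ _
  -- key step: n * a n ≤ (n+1) * a (n+1) for n ≥ N
  have key : ∀ n : ℕ, N ≤ n → (n : ℝ) * a n ≤ ((n : ℝ) + 1) * a (n + 1) := by
    intro n hn
    have hn1 : 1 ≤ n := hN1.trans hn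
    have npos : (0 : ℝ) < n := by exact_mod_cast hn1
    have ha1 : 0 < a (n + 1) := ha _ (by omega)
    have hrp : (0 : ℝ) < (n : ℝ) ^ γ := Real.rpow_pos_of_pos npos γ
    have hθn : θ n / (n : ℝ) ^ γ ≤ (1 - μ) / n := by
      have h1n := h1 n (le_trans ((le_max_left N1 N2).trans (le_max_left _ _)) hn)
      have htmp : θ n / (n : ℝ) ^ γ ≤ ((1 - μ) * (n : ℝ) ^ (γ - 1)) / (n : ℝ) ^ γ := by
        gcongr
      refine htmp.trans (le_of_eq ?_)
      rw [Real.rpow_sub npos, Real.rpow_one]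
      field_simp
    have h2n := h2 n (le_trans ((le_max_right N1 N2).trans (le_max_left _ _)) hn)
    have hcn : 0 < c (n + 1) := hc _ (by omega)
    have hfrac : a n / a (n + 1) ≤ ((n : ℝ) + 1) / n := by
      calc a n / a (n + 1) ≤ 1 - c (n + 1) / n + μ / n + θ n / (n : ℝ) ^ γ := h2n
        _ ≤ 1 - c (n + 1) / n + μ / n + (1 - μ) / n := by linarith
        _ = ((n : ℝ) + 1 - c (n + 1)) / n := by field_simp; ring
        _ ≤ ((n : ℝ) + 1) / n := by
            gcongr
            linarith
    rw [div_le_div_iff₀ ha1 npos] at hfrac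
    nlinarith [ha n hn1]
  -- monotonicity: N * a N ≤ n * a n for n ≥ N
  have mono : ∀ n : ℕ, N ≤ n → (N : ℝ) * a N ≤ (n : ℝ) * a n := by
    intro n hn
    induction n, hn using Nat.le_induction with
    | base => exact le_refl _
    | succ n hn ih =>
        refine ih.trans ((key n hn).trans (le_of_eq ?_))
        push_cast; ring
  set K : ℝ := (N : ℝ) * a N with hK
  have hKpos : 0 < K := mul_pos (by exact_mod_cast hN1) (ha N hN1)
  intro hS
  apply hcdiv
  rw [← summable_nat_add_iff N]
  have hS' : Summable (fun n : ℕ => (1 / K) * (c (n + N + 1) * a (n + N + 1))) := by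
    have := (summable_nat_add_iff (f := fun n : ℕ => c (n + 1) * a (n + 1)) N).mpr hS
    exact this.mul_left (1 / K)
  refine Summable.of_nonneg_of_le (fun n => ?_) (fun n => ?_) hS'
  · have : 0 < c (n + N + 1) := hc _ (by omega)
    positivity
  · have hn1 : N ≤ n + N + 1 := by omega
    have hcn : 0 < c (n + N + 1) := hc _ (by omega)
    have npos : (0 : ℝ) < ((n + N : ℕ) : ℝ) + 1 := by positivity
    have hmono := mono (n + N + 1) hn1
    have hcast : ((n + N + 1 : ℕ) : ℝ) = ((n + N : ℕ) : ℝ) + 1 := by push_cast; ring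
    rw [hcast] at hmono
    have hab : K / (((n + N : ℕ) : ℝ) + 1) ≤ a (n + N + 1) := by
      rw [div_le_iff₀ npos]
      nlinarith [ha (n + N + 1) (by omega)]
    calc c (n + N + 1) / (((n + N : ℕ) : ℝ) + 1)
        = (1 / K) * (c (n + N + 1) * (K / (((n + N : ℕ) : ℝ) + 1))) := by
          field_simp
      _ ≤ (1 / K) * (c (n + N + 1) * a (n + N + 1)) := by
          have h1k : (0:ℝ) ≤ 1 / K := by positivity
          exact mul_le_mul_of_nonneg_left (mul_le_mul_of_nonneg_left hab hcn.le) h1k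
end

section
/- Let (a_n)_{n≥1} be a decreasing sequence of positive real numbers. Then the series ∑ a_n converges if and only if there exists a sequence (q_n)_{n≥1} of positive real numbers such that q_n − 2·q_{n+1} ≥ 2·a_{2^{n+1}} for all sufficiently large n. -/
/-- Condensation-type characterization of convergence via the extended Kummer test. -/
theorem condensation_kummer (a : ℕ → ℝ) (ha : ∀ n, 1 ≤ n → 0 < a n)
    (hdec : ∀ n, 1 ≤ n → a (n + 1) ≤ a n) :
    Summable (fun n : ℕ => a (n + 1)) ↔
      ∃ q : ℕ → ℝ, (∀ n, 1 ≤ n → 0 < q n) ∧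
        ∃ N : ℕ, ∀ n, N ≤ n → q n - 2 * q (n + 1) ≥ 2 * a (2 ^ (n + 1)) := by
  -- antitone on [1, ∞)
  have hanti : ∀ m n, 1 ≤ m → m ≤ n → a n ≤ a m := by
    intro m n hm hmn
    induction n, hmn using Nat.le_induction with
    | base => exact le_refl _
    | succ n hmn ih => exact (hdec n (hm.trans hmn)).trans ih
  set f : ℕ → ℝ := fun n => a (max n 1) with hf
  have hf0 : ∀ n, 0 < f n := fun n => ha _ (le_max_right _ _)
  have hfa : ∀ n, 1 ≤ n → f n = a n := fun n hn => by simp [hf, max_eq_left hn]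
  set b : ℕ → ℝ := fun k => (2 : ℝ) ^ k * f (2 ^ k) with hb
  have hb0 : ∀ k, 0 < b k := fun k => mul_pos (by positivity) (hf0 _)
  have hba : ∀ k, b k = (2 : ℝ) ^ k * a (2 ^ k) := fun k => by
    simp only [hb]; rw [hfa _ Nat.one_le_two_pow]
  have hcond : (Summable fun k : ℕ => b k) ↔ Summable f := by
    exact summable_condensed_iff_of_nonneg (fun n => (hf0 n).le)
      (fun m n hm hmn => by
        rw [hfa m hm, hfa n (hm.trans_le hmn)]; exact hanti m n hm hmn)
  have hfs : Summable f ↔ Summable (fun n : ℕ => a (n + 1)) := by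
    rw [← summable_nat_add_iff 1]
    exact summable_congr fun n => hfa (n + 1) (Nat.le_add_left _ _)
  constructor
  · intro hsum
    have hbsum : Summable b := hcond.2 (hfs.2 hsum)
    refine ⟨fun n => (∑' k, b (k + (n + 1))) / 2 ^ n, ?_, 0, ?_⟩
    · intro n _
      apply div_pos _ (by positivity)
      exact Summable.tsum_pos ((summable_nat_add_iff (n + 1)).2 hbsum)
        (fun k => (hb0 _).le) 0 (hb0 _)
    · intro n _
      show 2 * a (2 ^ (n + 1)) ≤
        (∑' k, b (k + (n + 1))) / 2 ^ n - 2 * ((∑' k, b (k + (n + 2))) / 2 ^ (n + 1))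
      have htail : Summable fun k => b (k + (n + 1)) :=
        (summable_nat_add_iff (n + 1)).2 hbsum
      have hsplit : (∑' k, b (k + (n + 1))) = b (n + 1) + ∑' k, b (k + (n + 2)) := by
        rw [Summable.tsum_eq_zero_add htail]
        congr 1
        · simp
        · apply tsum_congr; intro k; congr 1; omega
      have hquot : 2 * ((∑' k, b (k + (n + 2))) / 2 ^ (n + 1))
          = (∑' k, b (k + (n + 2))) / 2 ^ n := by
        rw [pow_succ (2:ℝ)]
        field_simp
      rw [hquot, hsplit, add_div, add_sub_cancel_right, hba]
      have : (2:ℝ) ^ (n + 1) * a (2 ^ (n + 1)) / 2 ^ n = 2 * a (2 ^ (n + 1)) := by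
        rw [pow_succ (2:ℝ) n]
        field_simp
      rw [this]
  · rintro ⟨q, hq, N, hqN⟩
    set M := max N 1 with hM
    -- Q n = 2^n * q n, decreasing fast enough
    have key : ∀ n, M ≤ n → (2:ℝ) ^ n * q n - 2 ^ (n+1) * q (n+1) ≥ b (n+1) := by
      intro n hn
      have h := hqN n (le_trans (le_max_left _ _) hn)
      have : (2:ℝ)^n * (q n - 2 * q (n+1)) ≥ 2^n * (2 * a (2 ^ (n+1))) :=
        mul_le_mul_of_nonneg_left h (by positivity)
      rw [hba, mul_sub] at *
      calc (2:ℝ) ^ (n+1) * a (2 ^ (n+1)) = 2^n * (2 * a (2 ^ (n+1))) := by ring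
        _ ≤ 2^n * q n - 2^n * (2 * q (n+1)) := this
        _ = 2^n * q n - 2^(n+1) * q (n+1) := by ring
    have hbsum : Summable b := by
      rw [← summable_nat_add_iff (M + 1)]
      apply summable_of_sum_range_le (c := (2:ℝ)^M * q M)
        (fun k => (hb0 _).le)
      intro n
      have tele : ∑ i ∈ Finset.range n, b (i + (M + 1))
          ≤ (2:ℝ)^M * q M - 2^(M+n) * q (M+n) := by
        induction n with
        | zero => simp
        | succ n ih =>
          rw [Finset.sum_range_succ]
          have h := key (M + n) (Nat.le_add_right _ _)
          have : b (n + (M + 1)) ≤ (2:ℝ)^(M+n) * q (M+n) - 2^(M+n+1) * q (M+n+1) := by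
            have : n + (M + 1) = M + n + 1 := by ring
            rw [this]; exact h
          calc ∑ i ∈ Finset.range n, b (i + (M + 1)) + b (n + (M + 1))
              ≤ ((2:ℝ)^M * q M - 2^(M+n) * q (M+n))
                + ((2:ℝ)^(M+n) * q (M+n) - 2^(M+n+1) * q (M+n+1)) :=
                add_le_add ih this
            _ = (2:ℝ)^M * q M - 2^(M+n+1) * q (M+n+1) := by ring
      have hpos : 0 < (2:ℝ)^(M+n) * q (M+n) :=
        mul_pos (by positivity) (hq _ (le_trans (le_max_right _ _) (Nat.le_add_right _ _)))
      linarith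
    exact hfs.1 (hcond.1 hbsum)
end

section
/- Let (a_n)_{n≥1} be a sequence of positive real numbers. The series ∑ a_n converges if and only if there exists a sequence (q_n)_{n≥1} of positive real numbers such that q_n·(n+1)/n − q_{n+1} ≥ (n+1)·a_{n+1} for all sufficiently large n. -/
/-- Olivier-type characterization of summability via the extended Kummer test. -/
theorem olivier_kummer (a : ℕ → ℝ) (ha : ∀ n, 1 ≤ n → 0 < a n) :
    Summable (fun n : ℕ => a (n + 1)) ↔
      ∃ q : ℕ → ℝ, (∀ n, 1 ≤ n → 0 < q n) ∧
        ∃ N : ℕ, ∀ n, N ≤ n →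
          q n * ((n + 1 : ℝ) / n) - q (n + 1) ≥ (n + 1 : ℝ) * a (n + 1) := by
  constructor
  · intro h
    have hshift : ∀ n : ℕ, Summable (fun k => a (n + 1 + k)) := by
      intro n
      have h2 := (summable_nat_add_iff (f := fun m => a (m + 1)) n).mpr h
      exact h2.congr (fun k => by congr 1; omega)
    set R : ℕ → ℝ := fun n => ∑' k, a (n + 1 + k) with hR
    have hRrec : ∀ n : ℕ, R n = a (n + 1) + R (n + 1) := by
      intro n
      have := Summable.tsum_eq_zero_add (hshift n)
      simp only [hR]
      rw [this]
      have e1 : a (n + 1 + 0) = a (n + 1) := by norm_num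
      have e2 : (∑' k, a (n + 1 + (k + 1))) = R (n + 1) :=
        tsum_congr fun k => by congr 1; omega
      rw [e1, e2]
    have hRpos : ∀ n : ℕ, 0 < R n := by
      intro n
      refine Summable.tsum_pos (hshift n) (fun k => (ha _ (by omega)).le) 0 (ha _ (by omega))
    refine ⟨fun n => n * R n,
      fun n hn => mul_pos (by exact_mod_cast Nat.lt_of_lt_of_le Nat.zero_lt_one hn)
        (hRpos n), 1, fun n hn => ?_⟩
    have hn0 : (n : ℝ) ≠ 0 := Nat.cast_ne_zero.mpr (by omega)
    apply ge_of_eq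
    show (n : ℝ) * R n * (((n : ℝ) + 1) / n) - ((n + 1 : ℕ) : ℝ) * R (n + 1) =
      ((n : ℝ) + 1) * a (n + 1)
    push_cast
    rw [hRrec n]
    field_simp
    ring
  · rintro ⟨q, hq, N, hN⟩
    set M := max N 1 with hM
    set b : ℕ → ℝ := fun n => q n / n with hb
    have hstep : ∀ n, M ≤ n → a (n + 1) ≤ b n - b (n + 1) := by
      intro n hn
      have h1 := hN n (le_trans (le_max_left _ _) hn)
      have hn1 : 1 ≤ n := le_trans (le_max_right _ _) hn
      have hn0 : (n : ℝ) ≠ 0 := Nat.cast_ne_zero.mpr (by omega)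
      have hpos : (0:ℝ) < (n : ℝ) + 1 := by positivity
      have key : q n * ((n + 1 : ℝ) / n) - q (n + 1) =
          ((n:ℝ) + 1) * (b n - b (n + 1)) := by
        simp only [hb]
        push_cast
        field_simp
      rw [key] at h1
      have := (mul_le_mul_iff_right₀ hpos).mp h1
      linarith
    have hb_pos : ∀ n, 1 ≤ n → 0 ≤ b n := by
      intro n hn
      have := hq n hn
      have : (0:ℝ) ≤ q n := this.le
      positivity
    -- Summability of the tail starting at M
    have htail : Summable (fun k : ℕ => a (M + 1 + k)) := by
      apply summable_of_sum_range_le (c := b M)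
      · intro k; exact (ha _ (by omega)).le
      · intro n
        calc ∑ i ∈ Finset.range n, a (M + 1 + i)
            ≤ ∑ i ∈ Finset.range n, (b (M + i) - b (M + i + 1)) := by
              apply Finset.sum_le_sum
              intro i _
              have := hstep (M + i) (by omega)
              calc a (M + 1 + i) = a ((M + i) + 1) := by congr 1; omega
                _ ≤ b (M + i) - b (M + i + 1) := this
          _ = b (M + 0) - b (M + n) := Finset.sum_range_sub' (fun i => b (M + i)) n
          _ ≤ b M := by
              have := hb_pos (M + n) (by omega)
              simp only [Nat.add_zero]
              linarith
    have := (summable_nat_add_iff (f := fun m => a (m + 1)) M).mp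
      (htail.congr (fun k => by congr 1; omega))
    exact this
end

section
/- Let (a_n)_{n≥1} be a sequence of positive real numbers and let (q_n)_{n≥1} be a sequence of positive real numbers such that q_n·(n+1)/n − q_{n+1} ≥ (n+1)·a_{n+1} for all sufficiently large n and such that lim_{n→∞} (q_n·(n+1)/n − q_{n+1}) = 0. Then lim_{n→∞} n·a_n = 0. -/
open Filter

/-- Olivier's theorem without monotonicity, via the auxiliary sequence `q`. -/
theorem olivier_no_monotone (a q : ℕ → ℝ) (ha : ∀ n, 1 ≤ n → 0 < a n)
    (hq : ∀ n, 1 ≤ n → 0 < q n)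
    (h : ∃ N : ℕ, ∀ n, N ≤ n →
      q n * ((n + 1 : ℝ) / n) - q (n + 1) ≥ (n + 1 : ℝ) * a (n + 1))
    (hlim : Tendsto (fun n : ℕ => q n * ((n + 1 : ℝ) / n) - q (n + 1)) atTop (nhds 0)) :
    Tendsto (fun n : ℕ => (n : ℝ) * a n) atTop (nhds 0) := by
  rw [← tendsto_add_atTop_iff_nat 1]
  obtain ⟨N, hN⟩ := h
  apply squeeze_zero' (g := fun n : ℕ => q n * ((n + 1 : ℝ) / n) - q (n + 1)) _ _ hlim
  · filter_upwards [eventually_ge_atTop 1] with n hn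
    have := ha (n + 1) (by omega)
    positivity
  · filter_upwards [eventually_ge_atTop N] with n hn
    have := hN n hn
    push_cast
    linarith
end
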